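/- Let p be a prime and let α, s, t ∈ ℕ satisfy p^α = sf + tg. If F = M − N ∈ ker φ where M and N are monic monomials of K[x₁,…,xₙ,y₁,…,yₙ], then M^{p^α} − N^{p^α} belongs to the ideal generated by F₁, …, F_{n−1}, F_{n,p}. -/

import Mathlib

open MvPolynomial

lemma monomial_one_eq_prod {σ R : Type*} [CommSemiring R] [Fintype σ] [DecidableEq σ]
    (s : σ →₀ ℕ) : (monomial s (1 : R) : MvPolynomial σ R) = ∏ x : σ, X x ^ s x := by
  rw [← prod_X_pow_eq_monomial]
  apply Finset.prod_subset (Finset.subset_univ _)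
  intro x _ hx
  rw [Finsupp.notMem_support_iff.mp hx, pow_zero]

lemma prod_monomial_one {σ R ι : Type*} [CommSemiring R] (s : Finset ι) (d : ι → (σ →₀ ℕ)) :
    (∏ i ∈ s, (monomial (d i) (1 : R) : MvPolynomial σ R)) = monomial (∑ i ∈ s, d i) 1 := by
  induction s using Finset.cons_induction with
  | empty => simp
  | cons a s ha ih => rw [Finset.prod_cons, Finset.sum_cons, ih, monomial_mul, one_mul]

/-- Normal form computation in a commutative ring. -/
lemma nf_lemma {Q : Type*} [CommRing Q] (m fg fmg P β γ δ : ℕ)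
    (Xv : Fin m → Q) (XL : Q) (Yv : Fin m → Q) (YL : Q)
    (hrel : ∀ j, Yv j ^ fg = Xv j ^ fmg * XL ^ fmg)
    (hreln : YL ^ P = (∏ j, Xv j) ^ β * XL ^ γ * (∏ j, Yv j) ^ δ)
    (A : Fin m → ℕ) (AL : ℕ) (B : Fin m → ℕ) (C : ℕ) :
    (∏ j, Xv j ^ A j) * XL ^ AL * (∏ j, Yv j ^ B j) * YL ^ (P * C)
      = (∏ j, Xv j ^ (A j + β * C + fmg * ((B j + δ * C) / fg))) *
        XL ^ (AL + γ * C + fmg * (∑ j, (B j + δ * C) / fg)) *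
        (∏ j, Yv j ^ ((B j + δ * C) % fg)) := by
  have key : ∀ j, Yv j ^ (B j + δ * C) =
      Xv j ^ (fmg * ((B j + δ * C) / fg)) * XL ^ (fmg * ((B j + δ * C) / fg)) *
      Yv j ^ ((B j + δ * C) % fg) := by
    intro j
    conv_lhs => rw [← Nat.div_add_mod (B j + δ * C) fg]
    rw [pow_add, pow_mul, hrel j, mul_pow, ← pow_mul, ← pow_mul]
  have hXL : (XL : Q) ^ (fmg * (∑ j, (B j + δ * C) / fg)) =
      ∏ j, XL ^ (fmg * ((B j + δ * C) / fg)) := by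
    rw [Finset.prod_pow_eq_pow_sum, Finset.mul_sum]
  calc (∏ j, Xv j ^ A j) * XL ^ AL * (∏ j, Yv j ^ B j) * YL ^ (P * C)
      = (∏ j, Xv j ^ A j) * XL ^ AL *
        ((∏ j, Xv j ^ (β * C)) * XL ^ (γ * C) * ∏ j, Yv j ^ (B j + δ * C)) := by
        rw [pow_mul, hreln, mul_pow, mul_pow, ← pow_mul, ← pow_mul, ← pow_mul,
          ← Finset.prod_pow, ← Finset.prod_pow]
        simp_rw [pow_add]
        rw [Finset.prod_mul_distrib]
        ring
    _ = _ := by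
        simp_rw [key, pow_add]
        rw [hXL]
        simp_rw [Finset.prod_mul_distrib]
        ring

lemma arith_main (f g P s t : ℕ) (hg : 0 < g) (hgf : g < f) (hf2g : f ≤ 2*g)
    (hco : Nat.Coprime f g) (hP : P = s*f + t*g)
    (a a' b b' c c' : ℕ)
    (hE : f*g*a + (f-g)*b + g^2*c = f*g*a' + (f-g)*b' + g^2*c') :
    ((P*b + t*g*(f-g)*c) % (f*g) = (P*b' + t*g*(f-g)*c') % (f*g)) ∧
    (P*a + (s*g + t*(2*g-f))*c + (f-g)*((P*b + t*g*(f-g)*c)/(f*g)) =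
      P*a' + (s*g + t*(2*g-f))*c' + (f-g)*((P*b' + t*g*(f-g)*c')/(f*g))) := by
  have hgf' : g ≤ f := hgf.le
  set B := P*b + t*g*(f-g)*c with hB
  set B' := P*b' + t*g*(f-g)*c' with hB'
  have hE' : (f:ℤ)*g*a + ((f:ℤ)-g)*b + (g:ℤ)^2*c
      = (f:ℤ)*g*a' + ((f:ℤ)-g)*b' + (g:ℤ)^2*c' := by
    have := congrArg (Nat.cast : ℕ → ℤ) hE
    push_cast [Nat.cast_sub hgf'] at this
    linarith [this]
  have hBz : (B:ℤ) = (P:ℤ)*b + (t:ℤ)*g*((f:ℤ)-g)*c := by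
    rw [hB]; push_cast [Nat.cast_sub hgf']; ring
  have hBz' : (B':ℤ) = (P:ℤ)*b' + (t:ℤ)*g*((f:ℤ)-g)*c' := by
    rw [hB']; push_cast [Nat.cast_sub hgf']; ring
  have hPz : (P:ℤ) = (s:ℤ)*f + (t:ℤ)*g := by rw [hP]; push_cast; ring
  have hβz : ((s*g + t*(2*g-f) : ℕ) : ℤ) = (s:ℤ)*g + (t:ℤ)*(2*(g:ℤ)-f) := by
    push_cast [Nat.cast_sub hf2g]; ring
  have key : ((f:ℤ)-g) * ((B':ℤ) - B)
      = ((f:ℤ)*g) * ((P:ℤ)*((a:ℤ)-a') + ((s:ℤ)*g + (t:ℤ)*(2*(g:ℤ)-f))*((c:ℤ)-c')) := by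
    rw [hBz, hBz', hPz]
    linear_combination (-(s:ℤ)*f - (t:ℤ)*g) * hE'
  have hco1 : Nat.Coprime (f-g) g := (Nat.coprime_sub_self_left hgf').mpr hco
  have hco2 : Nat.Coprime (f-g) f := by
    have h := (Nat.coprime_sub_self_right (Nat.sub_le f g)).mp
    rw [Nat.sub_sub_self hgf'] at h
    exact h hco1
  have hcofg : Nat.Coprime (f-g) (f*g) := Nat.Coprime.mul_right hco2 hco1
  have hcoZ : IsCoprime ((f*g : ℕ) : ℤ) ((f:ℤ) - g) := by
    rw [← Nat.cast_sub hgf']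
    exact (Nat.isCoprime_iff_coprime.mpr hcofg.symm)
  have hdvd : ((f*g : ℕ) : ℤ) ∣ ((B':ℤ) - B) := by
    apply hcoZ.dvd_of_dvd_mul_left
    rw [key]; push_cast; exact Dvd.intro _ rfl
  have hmod : B ≡ B' [MOD f*g] := by
    rw [Nat.modEq_iff_dvd]
    exact_mod_cast hdvd
  refine ⟨hmod, ?_⟩
  obtain ⟨k, hk⟩ := hdvd
  have hfg0 : (0:ℤ) < ((f*g:ℕ):ℤ) := by
    have : 0 < f*g := Nat.mul_pos (hg.trans hgf) hg
    exact_mod_cast this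
  have hDk : ((f:ℤ)-g)*k = (P:ℤ)*((a:ℤ)-a') + ((s:ℤ)*g + (t:ℤ)*(2*(g:ℤ)-f))*((c:ℤ)-c') := by
    have h2 : ((f*g:ℕ):ℤ) * (((f:ℤ)-g)*k) = ((f*g:ℕ):ℤ) *
        ((P:ℤ)*((a:ℤ)-a') + ((s:ℤ)*g + (t:ℤ)*(2*(g:ℤ)-f))*((c:ℤ)-c')) := by
      have hfgc : ((f*g:ℕ):ℤ) = (f:ℤ)*g := by push_cast; ring
      rw [hfgc, ← key, ← hfgc, hk]; ring
    exact mul_left_cancel₀ hfg0.ne' h2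
  have hq := Nat.div_add_mod B (f*g)
  have hq' := Nat.div_add_mod B' (f*g)
  have hqz : ((f*g:ℕ):ℤ) * ((B / (f*g) : ℕ):ℤ) + ((B % (f*g) : ℕ):ℤ) = (B:ℤ) := by
    exact_mod_cast congrArg (Nat.cast : ℕ → ℤ) hq
  have hqz' : ((f*g:ℕ):ℤ) * ((B' / (f*g) : ℕ):ℤ) + ((B' % (f*g) : ℕ):ℤ) = (B':ℤ) := by
    exact_mod_cast congrArg (Nat.cast : ℕ → ℤ) hq'
  have hmodz : ((B % (f*g) : ℕ):ℤ) = ((B' % (f*g) : ℕ):ℤ) := by exact_mod_cast hmod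
  have hqk : ((B' / (f*g) : ℕ):ℤ) - ((B / (f*g) : ℕ):ℤ) = k := by
    have h3 : ((f*g:ℕ):ℤ) * (((B' / (f*g) : ℕ):ℤ) - ((B / (f*g) : ℕ):ℤ))
        = ((f*g:ℕ):ℤ) * k := by rw [← hk]; linarith [hqz, hqz', hmodz]
    exact mul_left_cancel₀ hfg0.ne' h3
  have expand : ∀ x y z : ℕ, ((P*x + (s*g + t*(2*g-f))*y + (f-g)*z : ℕ) : ℤ)
      = (P:ℤ)*x + ((s:ℤ)*g + (t:ℤ)*(2*(g:ℤ) - f))*y + ((f:ℤ)-(g:ℤ))*z := by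
    intro x y z
    push_cast [Nat.cast_sub hgf', Nat.cast_sub hf2g]
    ring
  apply @Nat.cast_injective ℤ _ _
  rw [expand, expand]
  linear_combination (-1 : ℤ) * hDk - ((f:ℤ) - g) * hqk

lemma arith_last (m f g P s t : ℕ) (hg : 0 < g) (hgf : g < f) (hf2g : f ≤ 2*g)
    (hm : 1 ≤ m) (hW : (m-1)*f ≤ m*g) (hng : m*f ≤ (m+1)*g) (hP : P = s*f + t*g)
    (al al' S S' c c' Qs Qs' As As' : ℕ)
    (hEl : f*g*al + (f-g)*S + (g*(m*g-(m-1)*f))*c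
        = f*g*al' + (f-g)*S' + (g*(m*g-(m-1)*f))*c')
    (hEsum : f*g*As + (f-g)*S + m*g^2*c = f*g*As' + (f-g)*S' + m*g^2*c')
    (hQs : P*As + m*((s*g+t*(2*g-f))*c) + (f-g)*Qs
        = P*As' + m*((s*g+t*(2*g-f))*c') + (f-g)*Qs') :
    P*al + (s*(m*g-(m-1)*f) + t*((m+1)*g-m*f))*c + (f-g)*Qs
      = P*al' + (s*(m*g-(m-1)*f) + t*((m+1)*g-m*f))*c' + (f-g)*Qs' := by
  have hgf' : g ≤ f := hgf.le
  have e1 := congrArg (Nat.cast : ℕ → ℤ) hQs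
  have e2 := congrArg (Nat.cast : ℕ → ℤ) hEsum
  have e3 := congrArg (Nat.cast : ℕ → ℤ) hEl
  have e4 := congrArg (Nat.cast : ℕ → ℤ) hP
  push_cast [Nat.cast_sub hgf', Nat.cast_sub hf2g, Nat.cast_sub hW,
    Nat.cast_sub hng, Nat.cast_sub hm] at e1 e2 e3 e4
  apply @Nat.cast_injective ℤ _ _
  push_cast [Nat.cast_sub hgf', Nat.cast_sub hf2g, Nat.cast_sub hW,
    Nat.cast_sub hng, Nat.cast_sub hm]
  have hfg0 : ((f:ℤ)*g) ≠ 0 := by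
    have : 0 < f*g := Nat.mul_pos (hg.trans hgf) hg
    exact_mod_cast this.ne'
  rw [e4] at e1 ⊢
  apply mul_left_cancel₀ hfg0
  linear_combination ((f:ℤ)*g) * e1 - ((s:ℤ)*f + t*g) * e2 + ((s:ℤ)*f + t*g) * e3

lemma split_prod {Q : Type*} [CommRing Q] {m : ℕ} (u : Fin (m+1) ⊕ Fin (m+1) → Q)
    (d : Fin (m+1) ⊕ Fin (m+1) → ℕ) :
    ∏ v, u v ^ d v =
      (∏ j : Fin m, u (Sum.inl (Fin.castSucc j)) ^ d (Sum.inl (Fin.castSucc j))) *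
      u (Sum.inl (Fin.last m)) ^ d (Sum.inl (Fin.last m)) *
      (∏ j : Fin m, u (Sum.inr (Fin.castSucc j)) ^ d (Sum.inr (Fin.castSucc j))) *
      u (Sum.inr (Fin.last m)) ^ d (Sum.inr (Fin.last m)) := by
  rw [Fintype.prod_sum_type,
    Fin.prod_univ_castSucc (f := fun i => u (Sum.inl i) ^ d (Sum.inl i)),
    Fin.prod_univ_castSucc (f := fun i => u (Sum.inr i) ^ d (Sum.inr i))]
  ring

lemma collect {Q : Type*} [CommRing Q] {m : ℕ} (x : Fin m → Q) (xl : Q)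
    (fg fmg g2 w : ℕ) (dxe : Fin m → ℕ) (dxl : ℕ) (dye : Fin m → ℕ) (dyl : ℕ) :
    (∏ j, (x j ^ fg) ^ dxe j) * (xl ^ fg) ^ dxl *
      (∏ j, (x j ^ fmg * xl ^ fmg) ^ dye j) * ((∏ j, x j ^ g2) * xl ^ w) ^ dyl
    = (∏ j, x j ^ (fg * dxe j + fmg * dye j + g2 * dyl)) *
      xl ^ (fg * dxl + fmg * (∑ j, dye j) + w * dyl) := by
  have hxl : (xl : Q) ^ (fmg * (∑ j, dye j)) = ∏ j, xl ^ (fmg * dye j) := by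
    rw [Finset.prod_pow_eq_pow_sum, Finset.mul_sum]
  simp_rw [pow_add, mul_pow, ← pow_mul, Finset.prod_mul_distrib]
  rw [hxl, ← Finset.prod_pow]
  simp_rw [← pow_mul]
  ring

lemma extract {K : Type*} [Field K] {m : ℕ} (A A' : Fin m → ℕ) (AL AL' : ℕ)
    (h : (∏ j : Fin m, (X (Fin.castSucc j) : MvPolynomial (Fin (m+1)) K) ^ A j) *
          X (Fin.last m) ^ AL
       = (∏ j : Fin m, (X (Fin.castSucc j) : MvPolynomial (Fin (m+1)) K) ^ A' j) *
          X (Fin.last m) ^ AL') :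
    (∀ j, A j = A' j) ∧ AL = AL' := by
  have conv1 : ∀ (B : Fin m → ℕ) (BL : ℕ),
      (∏ j : Fin m, (X (Fin.castSucc j) : MvPolynomial (Fin (m+1)) K) ^ B j) *
        X (Fin.last m) ^ BL
      = monomial ((∑ j : Fin m, Finsupp.single (Fin.castSucc j) (B j)) +
          Finsupp.single (Fin.last m) BL) 1 := by
    intro B BL
    simp_rw [X_pow_eq_monomial]
    rw [prod_monomial_one, monomial_mul, one_mul]
  rw [conv1, conv1, monomial_eq_monomial_iff] at h
  rcases h with ⟨h, -⟩ | ⟨h, -⟩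
  · constructor
    · intro j
      have h2 := DFunLike.congr_fun h (Fin.castSucc j)
      simpa [Finsupp.single_apply, Fin.castSucc_inj, (Fin.castSucc_lt_last j).ne',
        Finset.sum_ite_eq'] using h2
    · have h2 := DFunLike.congr_fun h (Fin.last m)
      simpa [Finsupp.single_apply, (Fin.castSucc_lt_last _).ne] using h2
  · exact absurd h one_ne_zero

set_option maxHeartbeats 1000000 in
set_option synthInstance.maxHeartbeats 1000000 in
/-- In the setting of the paper (`n ≥ 3`, coprime `f > g > 0`,
`(n-1)f ≤ ng`), let `p` be a prime and `p^α = sf + tg`. If `F = M − N ∈ ker φ` with `M, N`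
monic monomials, then `M^{p^α} − N^{p^α}` lies in the ideal generated by
`F₁, …, F_{n-1}, F_{n,p}`. -/
theorem stmt13 (n : ℕ) (hn : 3 ≤ n) (f g : ℕ) (hco : Nat.Coprime f g)
    (hg : 0 < g) (hgf : g < f) (hng : (n - 1) * f ≤ n * g)
    (K : Type*) [Field K]
    (p : ℕ) (hp : p.Prime) (α s t : ℕ) (hpst : p ^ α = s * f + t * g)
    (φ : MvPolynomial (Fin n ⊕ Fin n) K →ₐ[K] MvPolynomial (Fin n) K)
    (hφx : ∀ i : Fin n, φ (X (Sum.inl i)) = X i ^ (f * g))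
    (hφy : ∀ i : Fin (n - 1), φ (X (Sum.inr (Fin.castLE (by omega) i))) =
      X (Fin.castLE (by omega) i : Fin n) ^ (f - g) * X (⟨n - 1, by omega⟩ : Fin n) ^ (f - g))
    (hφyn : φ (X (Sum.inr (⟨n - 1, by omega⟩ : Fin n))) =
      (∏ i : Fin (n - 1), X (Fin.castLE (by omega) i : Fin n) ^ g ^ 2) *
        X (⟨n - 1, by omega⟩ : Fin n) ^ (g * ((n - 1) * g - (n - 2) * f)))
    (a b : (Fin n ⊕ Fin n) →₀ ℕ) (M N : MvPolynomial (Fin n ⊕ Fin n) K)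
    (hM : M = monomial a (1 : K)) (hN : N = monomial b (1 : K))
    (hF : M - N ∈ RingHom.ker φ) :
    M ^ (p ^ α) - N ^ (p ^ α) ∈
      Ideal.span
        ((Set.range fun i : Fin (n - 1) =>
            (X (Sum.inr (Fin.castLE (by omega) i : Fin n)) ^ (f * g) -
              X (Sum.inl (Fin.castLE (by omega) i : Fin n)) ^ (f - g) *
                X (Sum.inl (⟨n - 1, by omega⟩ : Fin n)) ^ (f - g) :
              MvPolynomial (Fin n ⊕ Fin n) K)) ∪
          {(X (Sum.inr (⟨n - 1, by omega⟩ : Fin n)) ^ (p ^ α) -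
            (∏ i : Fin (n - 1), X (Sum.inl (Fin.castLE (by omega) i : Fin n))) ^
                (s * g + t * (2 * g - f)) *
              X (Sum.inl (⟨n - 1, by omega⟩ : Fin n)) ^
                (s * ((n - 1) * g - (n - 2) * f) + t * (n * g - (n - 1) * f)) *
              (∏ i : Fin (n - 1), X (Sum.inr (Fin.castLE (by omega) i : Fin n))) ^
                (t * g * (f - g)) :
            MvPolynomial (Fin n ⊕ Fin n) K)}) := by
  obtain ⟨m, rfl⟩ : ∃ m, n = m + 1 := ⟨n - 1, by omega⟩
  have hm2 : 2 ≤ m := by omega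
  have hgf' : g ≤ f := hgf.le
  have hng' : m * f ≤ (m + 1) * g := by simpa using hng
  have hf2g : f ≤ 2 * g := by nlinarith [Nat.mul_le_mul_right (f - g) hm2]
  have hW : (m - 1) * f ≤ m * g := by
    have h1 : (m - 1) * f + f = m * f := by
      have : 1 ≤ m := by omega
      calc (m-1)*f + f = ((m-1)+1)*f := by ring
        _ = m*f := by rw [Nat.sub_add_cancel this]
    have h2 : (m+1)*g = m*g + g := by ring
    omega
  set P := p ^ α with hPdef
  have hP : P = s * f + t * g := hpst
  -- normalized φ hypotheses
  have hφy' : ∀ j : Fin m, φ (X (Sum.inr (Fin.castSucc j))) =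
      X (Fin.castSucc j) ^ (f - g) * X (Fin.last m) ^ (f - g) := fun j => hφy j
  have hφyn' : φ (X (Sum.inr (Fin.last m))) =
      (∏ j : Fin m, X (Fin.castSucc j) ^ g ^ 2) *
        X (Fin.last m) ^ (g * (m * g - (m - 1) * f)) := hφyn
  -- image of a monomial under φ
  have himg : ∀ d : (Fin (m+1) ⊕ Fin (m+1)) →₀ ℕ,
      φ (monomial d 1) =
      (∏ j : Fin m, (X (Fin.castSucc j) : MvPolynomial (Fin (m+1)) K) ^
          (f*g * d (Sum.inl (Fin.castSucc j)) + (f-g) * d (Sum.inr (Fin.castSucc j)) +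
            g^2 * d (Sum.inr (Fin.last m)))) *
        X (Fin.last m) ^ (f*g * d (Sum.inl (Fin.last m)) +
          (f-g) * (∑ j : Fin m, d (Sum.inr (Fin.castSucc j))) +
          (g*(m*g-(m-1)*f)) * d (Sum.inr (Fin.last m))) := by
    intro d
    rw [monomial_one_eq_prod, map_prod]
    simp_rw [map_pow]
    rw [split_prod (fun v => φ (X v)) (fun v => d v)]
    simp_rw [hφx, hφy']
    rw [hφyn']
    exact collect (fun j => X (Fin.castSucc j)) (X (Fin.last m)) (f*g) (f-g) (g^2)
      (g*(m*g-(m-1)*f)) _ _ _ _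
  -- exponent equations from the kernel condition
  have hFeq : φ M = φ N := by
    have h0 := hF
    rw [RingHom.mem_ker, map_sub, sub_eq_zero] at h0
    exact h0
  rw [hM, hN, himg a, himg b] at hFeq
  obtain ⟨hEj, hEl⟩ := extract _ _ _ _ hFeq
  -- the ideal
  set SS : Set (MvPolynomial (Fin (m+1) ⊕ Fin (m+1)) K) :=
    (Set.range fun j : Fin m =>
      (X (Sum.inr (Fin.castSucc j)) ^ (f*g) -
        X (Sum.inl (Fin.castSucc j)) ^ (f-g) * X (Sum.inl (Fin.last m)) ^ (f-g))) ∪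
    {(X (Sum.inr (Fin.last m)) ^ P -
       (∏ j : Fin m, X (Sum.inl (Fin.castSucc j))) ^ (s*g + t*(2*g-f)) *
         X (Sum.inl (Fin.last m)) ^ (s*(m*g-(m-1)*f) + t*((m+1)*g - m*f)) *
         (∏ j : Fin m, X (Sum.inr (Fin.castSucc j))) ^ (t*g*(f-g)))} with hSS
  show M ^ P - N ^ P ∈ Ideal.span SS
  set π := Ideal.Quotient.mk (Ideal.span SS) with hπ
  have hmem1 : ∀ j : Fin m, (X (Sum.inr (Fin.castSucc j)) ^ (f*g) -
      X (Sum.inl (Fin.castSucc j)) ^ (f-g) * X (Sum.inl (Fin.last m)) ^ (f-g) :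
      MvPolynomial (Fin (m+1) ⊕ Fin (m+1)) K) ∈ Ideal.span SS :=
    fun j => Ideal.subset_span (Set.mem_union_left _ ⟨j, rfl⟩)
  have hmem2 : (X (Sum.inr (Fin.last m)) ^ P -
       (∏ j : Fin m, X (Sum.inl (Fin.castSucc j))) ^ (s*g + t*(2*g-f)) *
         X (Sum.inl (Fin.last m)) ^ (s*(m*g-(m-1)*f) + t*((m+1)*g - m*f)) *
         (∏ j : Fin m, X (Sum.inr (Fin.castSucc j))) ^ (t*g*(f-g)) :
      MvPolynomial (Fin (m+1) ⊕ Fin (m+1)) K) ∈ Ideal.span SS :=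
    Ideal.subset_span (Set.mem_union_right _ rfl)
  have hrel1 : ∀ j : Fin m, π (X (Sum.inr (Fin.castSucc j))) ^ (f*g)
      = π (X (Sum.inl (Fin.castSucc j))) ^ (f-g) * π (X (Sum.inl (Fin.last m))) ^ (f-g) := by
    intro j
    have h0 := Ideal.Quotient.eq_zero_iff_mem.mpr (hmem1 j)
    rw [map_sub, sub_eq_zero, map_pow, map_mul, map_pow, map_pow] at h0
    exact h0
  have hrel2 : π (X (Sum.inr (Fin.last m))) ^ P
      = (∏ j : Fin m, π (X (Sum.inl (Fin.castSucc j)))) ^ (s*g+t*(2*g-f)) *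
        π (X (Sum.inl (Fin.last m))) ^ (s*(m*g-(m-1)*f) + t*((m+1)*g - m*f)) *
        (∏ j : Fin m, π (X (Sum.inr (Fin.castSucc j)))) ^ (t*g*(f-g)) := by
    have h0 := Ideal.Quotient.eq_zero_iff_mem.mpr hmem2
    rw [map_sub, sub_eq_zero] at h0
    simpa [map_pow, map_mul, map_prod] using h0
  -- image of P-th powers of monomials in the quotient
  have hMP : ∀ dM : (Fin (m+1) ⊕ Fin (m+1)) →₀ ℕ,
      π (monomial dM 1 ^ P) =
      (∏ j : Fin m, π (X (Sum.inl (Fin.castSucc j))) ^ (P * dM (Sum.inl (Fin.castSucc j)))) *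
        π (X (Sum.inl (Fin.last m))) ^ (P * dM (Sum.inl (Fin.last m))) *
      (∏ j : Fin m, π (X (Sum.inr (Fin.castSucc j))) ^ (P * dM (Sum.inr (Fin.castSucc j)))) *
        π (X (Sum.inr (Fin.last m))) ^ (P * dM (Sum.inr (Fin.last m))) := by
    intro dM
    have h1 : (monomial dM (1:K)) ^ P = ∏ v, X v ^ (P * dM v) := by
      rw [monomial_pow, one_pow, monomial_one_eq_prod]
      exact Finset.prod_congr rfl fun v _ => by rw [Finsupp.smul_apply, smul_eq_mul]
    rw [h1, map_prod]
    simp_rw [map_pow]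
    exact split_prod (fun v => π (X v)) (fun v => P * dM v)
  have hMPa := (hMP a).trans (nf_lemma m (f*g) (f-g) P (s*g+t*(2*g-f))
    (s*(m*g-(m-1)*f) + t*((m+1)*g - m*f)) (t*g*(f-g))
    (fun j => π (X (Sum.inl (Fin.castSucc j)))) (π (X (Sum.inl (Fin.last m))))
    (fun j => π (X (Sum.inr (Fin.castSucc j)))) (π (X (Sum.inr (Fin.last m))))
    hrel1 hrel2
    (fun j => P * a (Sum.inl (Fin.castSucc j))) (P * a (Sum.inl (Fin.last m)))
    (fun j => P * a (Sum.inr (Fin.castSucc j))) (a (Sum.inr (Fin.last m))))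
  have hNPb := (hMP b).trans (nf_lemma m (f*g) (f-g) P (s*g+t*(2*g-f))
    (s*(m*g-(m-1)*f) + t*((m+1)*g - m*f)) (t*g*(f-g))
    (fun j => π (X (Sum.inl (Fin.castSucc j)))) (π (X (Sum.inl (Fin.last m))))
    (fun j => π (X (Sum.inr (Fin.castSucc j)))) (π (X (Sum.inr (Fin.last m))))
    hrel1 hrel2
    (fun j => P * b (Sum.inl (Fin.castSucc j))) (P * b (Sum.inl (Fin.last m)))
    (fun j => P * b (Sum.inr (Fin.castSucc j))) (b (Sum.inr (Fin.last m))))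
  -- exponent equalities
  have harith : ∀ j : Fin m, _ := fun j : Fin m =>
    arith_main f g P s t hg hgf hf2g hco hP
      (a (Sum.inl (Fin.castSucc j))) (b (Sum.inl (Fin.castSucc j)))
      (a (Sum.inr (Fin.castSucc j))) (b (Sum.inr (Fin.castSucc j)))
      (a (Sum.inr (Fin.last m))) (b (Sum.inr (Fin.last m))) (hEj j)
  have hsum1 : ∀ (u ul : Fin m → ℕ) (cc : ℕ),
      ∑ j : Fin m, (f*g*(u j) + (f-g)*(ul j) + g^2*cc)
        = f*g*(∑ j, u j) + (f-g)*(∑ j, ul j) + m*g^2*cc := by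
    intro u ul cc
    rw [Finset.sum_add_distrib, Finset.sum_add_distrib, ← Finset.mul_sum, ← Finset.mul_sum,
      Finset.sum_const, Finset.card_univ, Fintype.card_fin, smul_eq_mul]
    ring
  have hEsum : f*g*(∑ j : Fin m, a (Sum.inl (Fin.castSucc j)))
      + (f-g)*(∑ j : Fin m, a (Sum.inr (Fin.castSucc j))) + m*g^2*(a (Sum.inr (Fin.last m)))
      = f*g*(∑ j : Fin m, b (Sum.inl (Fin.castSucc j)))
      + (f-g)*(∑ j : Fin m, b (Sum.inr (Fin.castSucc j))) + m*g^2*(b (Sum.inr (Fin.last m))) := by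
    rw [← hsum1, ← hsum1]
    exact Finset.sum_congr rfl fun j _ => hEj j
  have hsum2 : ∀ (u q : Fin m → ℕ) (cc : ℕ),
      ∑ j : Fin m, (P*(u j) + (s*g+t*(2*g-f))*cc + (f-g)*(q j))
        = P*(∑ j, u j) + m*((s*g+t*(2*g-f))*cc) + (f-g)*(∑ j, q j) := by
    intro u q cc
    simp only [Finset.sum_add_distrib, ← Finset.mul_sum, Finset.sum_const, Finset.card_univ,
      Fintype.card_fin, smul_eq_mul]
    ring
  have hQs : P*(∑ j : Fin m, a (Sum.inl (Fin.castSucc j)))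
      + m*((s*g+t*(2*g-f))*(a (Sum.inr (Fin.last m))))
      + (f-g)*(∑ j : Fin m, (P * a (Sum.inr (Fin.castSucc j))
          + t*g*(f-g) * a (Sum.inr (Fin.last m))) / (f*g))
      = P*(∑ j : Fin m, b (Sum.inl (Fin.castSucc j)))
      + m*((s*g+t*(2*g-f))*(b (Sum.inr (Fin.last m))))
      + (f-g)*(∑ j : Fin m, (P * b (Sum.inr (Fin.castSucc j))
          + t*g*(f-g) * b (Sum.inr (Fin.last m))) / (f*g)) := by
    rw [← hsum2, ← hsum2]
    exact Finset.sum_congr rfl fun j _ => (harith j).2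
  have hlast := arith_last m f g P s t hg hgf hf2g (by omega) hW hng' hP
    (a (Sum.inl (Fin.last m))) (b (Sum.inl (Fin.last m)))
    (∑ j : Fin m, a (Sum.inr (Fin.castSucc j))) (∑ j : Fin m, b (Sum.inr (Fin.castSucc j)))
    (a (Sum.inr (Fin.last m))) (b (Sum.inr (Fin.last m)))
    (∑ j : Fin m, (P * a (Sum.inr (Fin.castSucc j))
        + t*g*(f-g) * a (Sum.inr (Fin.last m))) / (f*g))
    (∑ j : Fin m, (P * b (Sum.inr (Fin.castSucc j))
        + t*g*(f-g) * b (Sum.inr (Fin.last m))) / (f*g))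
    (∑ j : Fin m, a (Sum.inl (Fin.castSucc j))) (∑ j : Fin m, b (Sum.inl (Fin.castSucc j)))
    hEl hEsum hQs
  -- conclude
  have hx1 : (∏ j : Fin m, π (X (Sum.inl (Fin.castSucc j))) ^
        (P * a (Sum.inl (Fin.castSucc j)) + (s*g+t*(2*g-f)) * a (Sum.inr (Fin.last m))
          + (f-g) * ((P * a (Sum.inr (Fin.castSucc j))
            + t*g*(f-g) * a (Sum.inr (Fin.last m))) / (f*g))))
      = (∏ j : Fin m, π (X (Sum.inl (Fin.castSucc j))) ^
        (P * b (Sum.inl (Fin.castSucc j)) + (s*g+t*(2*g-f)) * b (Sum.inr (Fin.last m))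
          + (f-g) * ((P * b (Sum.inr (Fin.castSucc j))
            + t*g*(f-g) * b (Sum.inr (Fin.last m))) / (f*g)))) :=
    Finset.prod_congr rfl fun j _ => by rw [(harith j).2]
  have hy1 : (∏ j : Fin m, π (X (Sum.inr (Fin.castSucc j))) ^
        ((P * a (Sum.inr (Fin.castSucc j)) + t*g*(f-g) * a (Sum.inr (Fin.last m))) % (f*g)))
      = (∏ j : Fin m, π (X (Sum.inr (Fin.castSucc j))) ^
        ((P * b (Sum.inr (Fin.castSucc j)) + t*g*(f-g) * b (Sum.inr (Fin.last m))) % (f*g))) :=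
    Finset.prod_congr rfl fun j _ => by rw [(harith j).1]
  have hfinal : π (M ^ P) = π (N ^ P) := by
    rw [hM, hN, hMPa, hNPb, hx1, hy1, hlast]
  exact Ideal.Quotient.eq.mp hfinal
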